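/- arXiv:1506.08716 — 2 statements merged into one kernel-verified Lean document; each statement's English description precedes it below -/
import Mathlib

section
/- For every integer n ≥ 0, the polynomials T_n satisfy the recurrence T_{n+1}(x) = (2nx + 1)·x·T_n(x) + x(1 − x²)·T_n′(x), where T_n′ denotes the formal derivative. -/
/-- The numbers T(n,k) defined by T(1,1) = 1, T(1,k) = 0 for k ≠ 1, and the
recurrence T(n+1,k) = k·T(n,k) + T(n,k-1) + (2n-k+2)·T(n,k-2) for n ≥ 1.
(The value at n = 0 encodes T_0(x) = 1.) -/
def Tc : ℕ → ℤ → ℤ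
  | 0, k => if k = 0 then 1 else 0
  | 1, k => if k = 1 then 1 else 0
  | (n+2), k => k * Tc (n+1) k + Tc (n+1) (k-1) + (2*((n : ℤ)+1) - k + 2) * Tc (n+1) (k-2)

/-- The polynomial T_n(x) = ∑_{k=1}^{2n-1} T(n,k) x^k for n ≥ 1, with T_0(x) = 1. -/
noncomputable def Tpoly (n : ℕ) : Polynomial ℤ :=
  if n = 0 then 1 else ∑ k ∈ Finset.Icc 1 (2*n - 1), Polynomial.C (Tc n k) * Polynomial.X ^ k

lemma tc_vanish : ∀ n : ℕ, 1 ≤ n → ∀ k : ℤ, (k ≤ 0 ∨ 2*(n:ℤ) ≤ k) → Tc n k = 0 := by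
  intro n
  induction n with
  | zero => omega
  | succ m ih =>
    intro _ k hk
    match m with
    | 0 =>
      simp only [Tc]
      have : k ≠ 1 := by push_cast at hk; omega
      simp [this]
    | m+1 =>
      have h1 : Tc (m+1) k = 0 := by
        apply ih (by omega); push_cast at hk ⊢; omega
      have h2 : Tc (m+1) (k-1) = 0 := by
        apply ih (by omega); push_cast at hk ⊢; omega
      have h3 : Tc (m+1) (k-2) = 0 := by
        apply ih (by omega); push_cast at hk ⊢; omega
      simp [Tc, h1, h2, h3]

lemma coeff_Tpoly (n : ℕ) (hn : 1 ≤ n) (m : ℕ) : (Tpoly n).coeff m = Tc n m := by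
  have hne : n ≠ 0 := by omega
  rw [Tpoly, if_neg hne, Polynomial.finset_sum_coeff]
  simp only [Polynomial.coeff_C_mul, Polynomial.coeff_X_pow, mul_ite, mul_one, mul_zero]
  rw [Finset.sum_ite_eq (Finset.Icc 1 (2*n-1)) m (fun k => Tc n k)]
  split
  · rfl
  · next h =>
    rw [Finset.mem_Icc] at h
    rw [tc_vanish n hn m]
    omega

/-- For every n ≥ 0, T_(n+1)(x) = (2nx + 1)·x·T_n(x) + x(1 - x²)·T_n'(x). -/
theorem stmt1 (n : ℕ) :
    Tpoly (n+1) = (Polynomial.C (2*(n : ℤ)) * Polynomial.X + 1) * Polynomial.X * Tpoly n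
      + Polynomial.X * (1 - Polynomial.X^2) * Polynomial.derivative (Tpoly n) := by
  match n with
  | 0 =>
    have h0 : Tpoly 0 = 1 := by simp [Tpoly]
    have h1 : Tpoly 1 = Polynomial.X := by
      simp [Tpoly]
      simp [Tc]
    rw [h0, h1]
    simp
  | N+1 =>
    ext m
    rw [coeff_Tpoly (N+2) (by omega) m]
    -- expand RHS
    have expand : (Polynomial.C (2*((N:ℤ)+1)) * Polynomial.X + 1) * Polynomial.X * Tpoly (N+1)
      + Polynomial.X * (1 - Polynomial.X^2) * Polynomial.derivative (Tpoly (N+1))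
      = Polynomial.C (2*((N:ℤ)+1)) * (Tpoly (N+1) * Polynomial.X^2) + Tpoly (N+1) * Polynomial.X^1
        + Polynomial.derivative (Tpoly (N+1)) * Polynomial.X^1
        - Polynomial.derivative (Tpoly (N+1)) * Polynomial.X^3 := by ring
    push_cast
    rw [expand]
    simp only [Polynomial.coeff_add, Polynomial.coeff_sub, Polynomial.coeff_C_mul,
      Polynomial.coeff_mul_X_pow', Polynomial.coeff_derivative]
    rw [coeff_Tpoly (N+1) (by omega)]
    simp only [Tc]
    have hv := tc_vanish (N+1) (by omega)
    match m with
    | 0 =>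
      rw [if_neg (by omega), if_neg (by omega), if_neg (by omega), if_neg (by omega)]
      push_cast
      rw [hv (-1) (by omega), hv (-2) (by omega)]
      ring
    | 1 =>
      rw [if_neg (by omega), if_pos (by omega), if_pos (by omega), if_neg (by omega)]
      simp only [coeff_Tpoly (N+1) (by omega), show (1:ℕ)-1 = 0 from rfl,
        show (1:ℕ)-1+1 = 1 from rfl]
      push_cast
      rw [hv 0 (by omega), hv (-1) (by omega)]
      ring
    | 2 =>
      rw [if_pos (by omega), if_pos (by omega), if_pos (by omega), if_neg (by omega)]
      simp only [coeff_Tpoly (N+1) (by omega), show (2:ℕ)-2 = 0 from rfl,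
        show (2:ℕ)-1 = 1 from rfl, show (2:ℕ)-1+1 = 2 from rfl]
      push_cast
      ring
    | (m+3) =>
      rw [if_pos (by omega), if_pos (by omega), if_pos (by omega), if_pos (by omega)]
      simp only [coeff_Tpoly (N+1) (by omega),
        show m+3-2 = m+1 from rfl, show m+3-1 = m+2 from rfl, show m+3-3 = m from rfl,
        show m+2+1 = m+3 from rfl, show m+0+1 = m+1 from rfl]
      push_cast
      rw [show ((m:ℤ)+3) - 1 = (m:ℤ)+2 by ring, show ((m:ℤ)+3) - 2 = (m:ℤ)+1 by ring]
      ring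
end

section
/- For every integer n ≥ 1, 2(1+x)^{n−1} A_n(x) = ∑_{k=0}^{n} C(n,k) T_k(x) T_{n−k}(x), where C(n,k) is the binomial coefficient, as an identity of polynomials. -/
open Polynomial Finset


/-- The value of the permutation π ∈ S_n at the (0-based) position i. -/
def permVal {n : ℕ} (π : Equiv.Perm (Fin n)) (i : ℕ) : ℕ :=
  if h : i < n then (π ⟨i, h⟩ : ℕ) else n

/-- The number of descents of π ∈ S_n. -/
def desPerm {n : ℕ} (π : Equiv.Perm (Fin n)) : ℕ :=
  ((Finset.range (n - 1)).filter (fun i => permVal π (i+1) < permVal π i)).card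

/-- The Eulerian polynomial A_n(x) = ∑_(π ∈ S_n) x^(des(π)+1). -/
noncomputable def eulerianPoly (n : ℕ) : Polynomial ℤ :=
  ∑ π : Equiv.Perm (Fin n), Polynomial.X ^ (desPerm π + 1)


lemma Tc_neg : ∀ (n : ℕ) (k : ℤ), k < 0 → Tc n k = 0 := by
  intro n
  induction n with
  | zero => intro k hk; simp [Tc]; omega
  | succ m ih =>
    match m with
    | 0 => intro k hk; simp [Tc]; omega
    | m'+1 =>
      intro k hk
      rw [show m' + 1 + 1 = m' + 2 from rfl, Tc]
      rw [ih k hk, ih (k-1) (by omega), ih (k-2) (by omega)]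
      ring

lemma Tc_hi : ∀ (n : ℕ) (k : ℤ), 2*n ≤ k → 1 ≤ k → Tc n k = 0 := by
  intro n
  induction n with
  | zero => intro k h1 h2; simp [Tc]; omega
  | succ m ih =>
    match m with
    | 0 => intro k h1 h2; simp [Tc]; push_cast at h1; omega
    | m'+1 =>
      intro k h1 h2
      push_cast at h1
      rw [show m' + 1 + 1 = m' + 2 from rfl, Tc]
      rw [ih k (by push_cast; omega) (by omega),
          ih (k-1) (by push_cast; omega) (by omega),
          ih (k-2) (by push_cast; omega) (by omega)]
      ring

lemma Tc_zero (n : ℕ) (hn : 1 ≤ n) : Tc n 0 = 0 := by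
  match n with
  | 1 => simp [Tc]
  | m+2 =>
    rw [Tc]
    rw [show (0:ℤ)-1 = -1 from rfl, show (0:ℤ)-2 = -2 from rfl,
        Tc_neg (m+1) (-1) (by omega), Tc_neg (m+1) (-2) (by omega)]
    ring

lemma Tc_rec (n : ℕ) (k : ℤ) :
    Tc (n+1) k = k * Tc n k + Tc n (k-1) + (2*(n:ℤ) - k + 2) * Tc n (k-2) := by
  match n with
  | 0 =>
    simp only [Tc]
    by_cases h1 : k = 1
    · subst h1; norm_num
    · by_cases h0 : k = 0
      · subst h0; norm_num
      · by_cases h2 : k = 2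
        · subst h2; norm_num
        · rw [if_neg h1, if_neg h0, if_neg (by omega), if_neg (by omega)]
          ring
  | m+1 =>
    rw [show m + 1 + 1 = m + 2 from rfl, Tc]
    push_cast
    ring_nf

noncomputable def Ppoly (n : ℕ) : Polynomial ℤ :=
  ∑ k ∈ Finset.range (2*n+1), Polynomial.C (Tc n (k:ℤ)) * Polynomial.X ^ k

lemma Tpoly_eq_Ppoly (n : ℕ) : Tpoly n = Ppoly n := by
  rcases Nat.eq_zero_or_pos n with h | h
  · subst h
    simp [Tpoly, Ppoly, Tc]
  · rw [Tpoly, if_neg (by omega), Ppoly]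
    apply Finset.sum_subset
    · intro k hk
      simp only [Finset.mem_Icc, Finset.mem_range] at *
      omega
    · intro k hk hk'
      simp only [Finset.mem_Icc, Finset.mem_range, not_and, not_le] at hk hk'
      rcases Nat.eq_zero_or_pos k with h0 | h0
      · subst h0; rw [show ((0:ℕ):ℤ) = 0 from rfl, Tc_zero n h]; simp
      · rw [Tc_hi n k (by omega) (by omega)]; simp

lemma Ppoly_rec (n : ℕ) :
    Ppoly (n+1) = X * (1 - X^2) * derivative (Ppoly n)
      + (X + C (2*(n:ℤ)) * X^2) * Ppoly n := by
  have hD : derivative (Ppoly n)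
      = ∑ k ∈ Finset.range (2*n+1), C (Tc n (k:ℤ) * (k:ℤ)) * X ^ (k-1) := by
    rw [Ppoly, derivative_sum]
    refine Finset.sum_congr rfl fun k _ => ?_
    rw [derivative_C_mul_X_pow]
  have hS1 : ∑ k ∈ Finset.range (2*(n+1)+1), C ((k:ℤ) * Tc n (k:ℤ)) * X ^ k
      = X * derivative (Ppoly n) := by
    rw [hD, Finset.mul_sum]
    rw [show 2*(n+1)+1 = 2*n+1 + 2 by ring]
    rw [Finset.sum_range_succ, Finset.sum_range_succ]
    rw [Tc_hi n ((2*n+1 : ℕ):ℤ) (by push_cast; omega) (by push_cast; omega)]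
    rw [Tc_hi n ((2*n+1+1 : ℕ):ℤ) (by push_cast; omega) (by push_cast; omega)]
    simp only [mul_zero, zero_mul, map_zero, add_zero]
    refine Finset.sum_congr rfl fun k _ => ?_
    match k with
    | 0 => simp
    | j+1 =>
      rw [show j+1-1 = j from rfl]
      rw [mul_comm (Tc n _), pow_succ]
      ring
  have hS2 : ∑ k ∈ Finset.range (2*(n+1)+1), C (Tc n ((k:ℤ)-1)) * X ^ k
      = X * Ppoly n := by
    rw [show 2*(n+1)+1 = (2*n+2)+1 by ring, Finset.sum_range_succ']
    rw [show ((0:ℕ):ℤ) - 1 = -1 by norm_num, Tc_neg n (-1) (by norm_num)]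
    simp only [map_zero, zero_mul, add_zero]
    rw [Finset.sum_range_succ]
    rw [show ((2*n+1+1 : ℕ):ℤ) - 1 = ((2*n+1:ℕ):ℤ) by push_cast; ring]
    rw [Tc_hi n ((2*n+1 : ℕ):ℤ) (by push_cast; omega) (by push_cast; omega)]
    simp only [map_zero, zero_mul, add_zero]
    rw [Ppoly, Finset.mul_sum]
    refine Finset.sum_congr rfl fun k _ => ?_
    rw [show ((k+1:ℕ):ℤ) - 1 = (k:ℤ) by push_cast; ring, pow_succ]
    ring
  have hS3 : ∑ k ∈ Finset.range (2*(n+1)+1), C ((2*(n:ℤ) - (k:ℤ) + 2) * Tc n ((k:ℤ)-2)) * X ^ k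
      = C (2*(n:ℤ)) * X^2 * Ppoly n - X^3 * derivative (Ppoly n) := by
    rw [show 2*(n+1)+1 = ((2*n+1)+1)+1 by ring, Finset.sum_range_succ', Finset.sum_range_succ']
    rw [show ((0:ℕ):ℤ) - 2 = -2 by norm_num, Tc_neg n (-2) (by norm_num)]
    rw [show ((0+1:ℕ):ℤ) - 2 = -1 by norm_num, Tc_neg n (-1) (by norm_num)]
    simp only [mul_zero, map_zero, zero_mul, add_zero]
    rw [hD, Ppoly, Finset.mul_sum, Finset.mul_sum, ← Finset.sum_sub_distrib]
    refine Finset.sum_congr rfl fun k _ => ?_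
    rw [show ((k+1+1:ℕ):ℤ) - 2 = (k:ℤ) by push_cast; ring,
        show 2*(n:ℤ) - ((k+1+1:ℕ):ℤ) + 2 = 2*(n:ℤ) - (k:ℤ) by push_cast; ring]
    match k with
    | 0 =>
      simp
      ring
    | j+1 =>
      rw [show j+1-1 = j from rfl]
      rw [show (2*(n:ℤ) - ((j+1:ℕ):ℤ)) * Tc n ((j+1:ℕ):ℤ)
            = 2*(n:ℤ) * Tc n ((j+1:ℕ):ℤ) - Tc n ((j+1:ℕ):ℤ) * ((j+1:ℕ):ℤ) by ring]
      rw [map_sub, map_mul]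
      ring
  have expand : Ppoly (n+1)
      = ∑ k ∈ Finset.range (2*(n+1)+1), C ((k:ℤ) * Tc n (k:ℤ)) * X ^ k
      + ∑ k ∈ Finset.range (2*(n+1)+1), C (Tc n ((k:ℤ)-1)) * X ^ k
      + ∑ k ∈ Finset.range (2*(n+1)+1), C ((2*(n:ℤ) - (k:ℤ) + 2) * Tc n ((k:ℤ)-2)) * X ^ k := by
    rw [Ppoly, ← Finset.sum_add_distrib, ← Finset.sum_add_distrib]
    refine Finset.sum_congr rfl fun k _ => ?_
    rw [Tc_rec n (k:ℤ), map_add, map_add]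
    ring
  rw [expand, hS1, hS2, hS3]
  ring



def dsc {n : ℕ} (σ : Equiv.Perm (Fin n)) (i : ℕ) : Prop :=
  permVal σ (i+1) < permVal σ i

instance {n : ℕ} (σ : Equiv.Perm (Fin n)) (i : ℕ) : Decidable (dsc σ i) := by
  unfold dsc; infer_instance

lemma permVal_lt {n : ℕ} (σ : Equiv.Perm (Fin n)) {i : ℕ} (h : i < n) :
    permVal σ i < n := by
  rw [permVal, dif_pos h]; exact (σ ⟨i, h⟩).isLt

lemma permVal_of_lt {n : ℕ} (σ : Equiv.Perm (Fin n)) {i : ℕ} (h : i < n) :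
    permVal σ i = (σ ⟨i, h⟩ : ℕ) := by rw [permVal, dif_pos h]

lemma permVal_ge {n : ℕ} (σ : Equiv.Perm (Fin n)) {i : ℕ} (h : n ≤ i) :
    permVal σ i = n := by rw [permVal, dif_neg (by omega)]

lemma permVal_le {n : ℕ} (σ : Equiv.Perm (Fin n)) (i : ℕ) : permVal σ i ≤ n := by
  rcases lt_or_ge i n with h | h
  · exact (permVal_lt σ h).le
  · rw [permVal_ge σ h]

lemma dsc_false {n : ℕ} (σ : Equiv.Perm (Fin n)) {i : ℕ} (h : n - 1 ≤ i) :
    ¬ dsc σ i := by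
  rw [dsc, permVal_ge σ (by omega)]
  exact not_lt.mpr (permVal_le σ i)

lemma desPerm_eq {n : ℕ} (σ : Equiv.Perm (Fin n)) {m : ℕ} (hm : n - 1 ≤ m) :
    desPerm σ = ∑ i ∈ Finset.range m, if dsc σ i then 1 else 0 := by
  rw [desPerm, Finset.card_filter]
  apply Finset.sum_subset
  · exact Finset.range_subset_range.mpr (by omega)
  · intro i hi hi'
    simp only [Finset.mem_range] at hi hi'
    rw [if_neg]
    exact dsc_false σ (by omega)

/-- insertion of the maximal element at position `j`. -/
def ins {n : ℕ} (j : Fin (n+1)) (σ : Equiv.Perm (Fin n)) : Equiv.Perm (Fin (n+1)) :=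
  (finSuccEquiv' j).trans ((Equiv.optionCongr σ).trans (finSuccEquiv' (Fin.last n)).symm)

lemma ins_apply_self {n : ℕ} (j : Fin (n+1)) (σ : Equiv.Perm (Fin n)) :
    ins j σ j = Fin.last n := by
  simp [ins, Equiv.trans_apply, finSuccEquiv'_at, Equiv.optionCongr_apply]

lemma ins_succAbove {n : ℕ} (j : Fin (n+1)) (σ : Equiv.Perm (Fin n)) (m : Fin n) :
    ins j σ (j.succAbove m) = (σ m).castSucc := by
  simp [ins, Equiv.trans_apply, finSuccEquiv'_succAbove, Equiv.optionCongr_apply,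
    finSuccEquiv'_symm_some, Fin.succAbove_last]

lemma ins_val {n : ℕ} (j : Fin (n+1)) (σ : Equiv.Perm (Fin n)) {i : ℕ} (hi : i ≤ n) :
    permVal (ins j σ) i
      = if i < (j:ℕ) then permVal σ i
        else if i = (j:ℕ) then n
        else permVal σ (i-1) := by
  have hj : (j:ℕ) ≤ n := Nat.lt_succ_iff.mp j.isLt
  rcases lt_trichotomy i (j:ℕ) with h | h | h
  · rw [if_pos h]
    have hin : i < n := lt_of_lt_of_le h hj
    rw [permVal_of_lt _ (show i < n+1 by omega), permVal_of_lt σ hin]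
    have h1 : (⟨i, by omega⟩ : Fin (n+1)) = (⟨i, hin⟩ : Fin n).castSucc := rfl
    rw [h1, ← Fin.succAbove_of_castSucc_lt j _
      (show (⟨i, hin⟩ : Fin n).castSucc < j from by
        rw [Fin.lt_def]; exact h), ins_succAbove]
    simp
  · rw [if_neg (by omega), if_pos h]
    rw [permVal_of_lt _ (show i < n+1 by omega)]
    have h1 : (⟨i, by omega⟩ : Fin (n+1)) = j := Fin.ext h
    rw [h1, ins_apply_self, Fin.val_last]
  · rw [if_neg (by omega), if_neg (by omega)]
    have hin : i - 1 < n := by omega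
    rw [permVal_of_lt _ (show i < n+1 by omega), permVal_of_lt σ hin]
    have h1 : (⟨i, by omega⟩ : Fin (n+1)) = (⟨i-1, hin⟩ : Fin n).succ := by
      apply Fin.ext; simp [Fin.val_succ]; omega
    rw [h1, ← Fin.succAbove_of_le_castSucc j _
      (by rw [Fin.le_def]; simp; omega), ins_succAbove]
    simp

/-- auxiliary step function for counting descents of `ins j σ`. -/
def hfun {n : ℕ} (σ : Equiv.Perm (Fin n)) (J : ℕ) (i : ℕ) : ℕ :=
  if i = J then 1
  else if i + 1 = J then 0
  else if i < J then (if dsc σ i then 1 else 0)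
  else (if dsc σ (i-1) then 1 else 0)

lemma claim1 {n : ℕ} (σ : Equiv.Perm (Fin n)) (J : ℕ) :
    (∑ i ∈ Finset.range J, hfun σ J i)
        + (if 1 ≤ J ∧ dsc σ (J-1) then 1 else 0)
      = ∑ i ∈ Finset.range J, (if dsc σ i then 1 else 0) := by
  match J with
  | 0 => simp
  | J'+1 =>
    rw [Finset.sum_range_succ, Finset.sum_range_succ]
    have h1 : hfun σ (J'+1) J' = 0 := by
      rw [hfun, if_neg (by omega), if_pos rfl]
    have h2 : (if 1 ≤ J'+1 ∧ dsc σ (J'+1-1) then 1 else 0)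
        = (if dsc σ J' then 1 else 0) := by
      rcases Classical.em (dsc σ J') with h | h
      · rw [if_pos ⟨by omega, by simpa using h⟩, if_pos h]
      · rw [if_neg (fun hx => h (by simpa using hx.2)), if_neg h]
    rw [h1, h2]
    have h3 : ∀ i ∈ Finset.range J', hfun σ (J'+1) i = (if dsc σ i then 1 else 0) := by
      intro i hi
      rw [Finset.mem_range] at hi
      rw [hfun, if_neg (by omega), if_neg (by omega), if_pos (by omega)]
    rw [Finset.sum_congr rfl h3]
    omega

lemma des_ins {n : ℕ} (j : Fin (n+1)) (σ : Equiv.Perm (Fin n)) :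
    desPerm (ins j σ)
      = if ((j:ℕ) = n ∨ (1 ≤ (j:ℕ) ∧ dsc σ ((j:ℕ)-1))) then desPerm σ
        else desPerm σ + 1 := by
  set J := (j:ℕ) with hJdef
  have hJ : J ≤ n := Nat.lt_succ_iff.mp j.isLt
  have step1 : desPerm (ins j σ) = ∑ i ∈ Finset.range n, hfun σ J i := by
    rw [desPerm_eq (ins j σ) (m := n) (by omega)]
    refine Finset.sum_congr rfl fun i hi => ?_
    rw [Finset.mem_range] at hi
    rw [hfun]
    by_cases h1 : i = J
    · rw [if_pos h1, if_pos]
      rw [dsc, ins_val j σ (by omega : i + 1 ≤ n), ins_val j σ (by omega : i ≤ n)]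
      rw [if_neg (by omega), if_neg (by omega), if_neg (by omega), if_pos h1,
        show i+1-1 = i by omega]
      exact permVal_lt σ (by omega)
    · by_cases h2 : i + 1 = J
      · rw [if_neg h1, if_pos h2, if_neg]
        rw [dsc, ins_val j σ (by omega : i + 1 ≤ n), ins_val j σ (by omega : i ≤ n)]
        rw [if_neg (by omega), if_pos h2, if_pos (by omega)]
        exact not_lt.mpr (permVal_le σ i)
      · by_cases h3 : i < J
        · rw [if_neg h1, if_neg h2, if_pos h3]
          have he : dsc (ins j σ) i = dsc σ i := by
            rw [dsc, dsc, ins_val j σ (by omega : i + 1 ≤ n),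
              ins_val j σ (by omega : i ≤ n), if_pos (by omega), if_pos h3]
          simp only [he]
        · rw [if_neg h1, if_neg h2, if_neg h3]
          have he : dsc (ins j σ) i = dsc σ (i-1) := by
            rw [dsc, dsc, ins_val j σ (by omega : i + 1 ≤ n),
              ins_val j σ (by omega : i ≤ n)]
            rw [if_neg (by omega), if_neg (by omega), if_neg (by omega),
              if_neg (by omega), show i+1-1 = i by omega, show i-1+1 = i by omega]
          simp only [he]
  by_cases hJn : J = n
  · rw [if_pos (Or.inl hJn), step1]
    have hc := claim1 σ J
    have hd : ¬ dsc σ (J - 1) := dsc_false σ (by omega)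
    rw [if_neg (by intro hx; exact hd hx.2),
      ← desPerm_eq σ (by omega : n - 1 ≤ J)] at hc
    rw [hJn] at hc
    rw [hJn]
    omega
  · have hJn' : J < n := by omega
    have hsplit : ∑ i ∈ Finset.range n, hfun σ J i
        = (∑ i ∈ Finset.range J, hfun σ J i) + ∑ i ∈ Finset.Ico J n, hfun σ J i := by
      rw [Finset.sum_range_add_sum_Ico _ hJ]
    have hIco : ∑ i ∈ Finset.Ico J n, hfun σ J i
        = (∑ i ∈ Finset.Ico J (n-1), (if dsc σ i then 1 else 0)) + 1 := by
      rw [Finset.sum_Ico_eq_sum_range, show n - J = (n-J-1)+1 by omega,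
        Finset.sum_range_succ']
      have h0 : hfun σ J (J + 0) = 1 := by rw [hfun, if_pos (by omega)]
      have h1 : ∀ i ∈ Finset.range (n-J-1),
          hfun σ J (J + (i+1)) = (if dsc σ (J + i) then 1 else 0) := by
        intro i hi
        rw [hfun, if_neg (by omega), if_neg (by omega), if_neg (by omega),
          show J + (i+1) - 1 = J + i by omega]
      rw [h0, Finset.sum_congr rfl h1, Finset.sum_Ico_eq_sum_range,
        show n - 1 - J = n - J - 1 by omega]
    have hjoin : (∑ i ∈ Finset.range J, (if dsc σ i then 1 else 0))
        + ∑ i ∈ Finset.Ico J (n-1), (if dsc σ i then 1 else 0) = desPerm σ := by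
      rw [Finset.sum_range_add_sum_Ico _ (by omega : J ≤ n - 1),
        ← desPerm_eq σ (le_refl _)]
    have hc := claim1 σ J
    rw [step1, hsplit, hIco]
    by_cases hc2 : 1 ≤ J ∧ dsc σ (J-1)
    · rw [if_pos (Or.inr hc2)]
      rw [if_pos hc2] at hc
      omega
    · rw [if_neg (by rintro (h | h); exact hJn h; exact hc2 h)]
      rw [if_neg hc2] at hc
      omega

lemma insSum {n : ℕ} (σ : Equiv.Perm (Fin n)) :
    ∑ j : Fin (n+1), (Polynomial.X : Polynomial ℤ) ^ (desPerm (ins j σ) + 1)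
      = C ((desPerm σ : ℤ) + 1) * X ^ (desPerm σ + 1)
        + C ((n : ℤ) - (desPerm σ : ℤ)) * X ^ (desPerm σ + 2) := by
  have hrw : ∀ j : Fin (n+1), (Polynomial.X : Polynomial ℤ) ^ (desPerm (ins j σ) + 1)
      = (fun i : ℕ => if (i = n ∨ (1 ≤ i ∧ dsc σ (i-1)))
          then (Polynomial.X : Polynomial ℤ) ^ (desPerm σ + 1)
          else (Polynomial.X : Polynomial ℤ) ^ (desPerm σ + 2)) (j : ℕ) := by
    intro j
    simp only
    rw [des_ins]
    by_cases h : ((j:ℕ) = n ∨ (1 ≤ (j:ℕ) ∧ dsc σ ((j:ℕ)-1)))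
    · rw [if_pos h, if_pos h]
    · rw [if_neg h, if_neg h]
  rw [Finset.sum_congr rfl (fun j _ => hrw j),
    Fin.sum_univ_eq_sum_range
      (fun i : ℕ => if (i = n ∨ (1 ≤ i ∧ dsc σ (i-1)))
          then (Polynomial.X : Polynomial ℤ) ^ (desPerm σ + 1)
          else (Polynomial.X : Polynomial ℤ) ^ (desPerm σ + 2)) (n+1)]
  simp only [Finset.sum_range_succ]
  rw [if_pos (Or.inl trivial)]
  have hcong : ∀ i ∈ Finset.range n,
      (if (i = n ∨ (1 ≤ i ∧ dsc σ (i-1)))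
          then (Polynomial.X : Polynomial ℤ) ^ (desPerm σ + 1)
          else (Polynomial.X : Polynomial ℤ) ^ (desPerm σ + 2))
        = (if (1 ≤ i ∧ dsc σ (i-1))
          then (Polynomial.X : Polynomial ℤ) ^ (desPerm σ + 1)
          else (Polynomial.X : Polynomial ℤ) ^ (desPerm σ + 2)) := by
    intro i hi
    rw [Finset.mem_range] at hi
    by_cases h : 1 ≤ i ∧ dsc σ (i-1)
    · rw [if_pos (Or.inr h), if_pos h]
    · rw [if_neg (fun hx => hx.elim (fun h' => by omega) (fun h' => h h')), if_neg h]
  rw [Finset.sum_congr rfl hcong]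
  match n with
  | 0 =>
    have hd : desPerm σ = 0 := by simp [desPerm]
    rw [hd]
    simp
  | m+1 =>
    rw [Finset.sum_range_succ', if_neg (by rintro ⟨h, _⟩; omega)]
    have hcong2 : ∀ i ∈ Finset.range m,
        (if (1 ≤ i+1 ∧ dsc σ (i+1-1))
            then (Polynomial.X : Polynomial ℤ) ^ (desPerm σ + 1)
            else (Polynomial.X : Polynomial ℤ) ^ (desPerm σ + 2))
          = (if dsc σ i
            then (Polynomial.X : Polynomial ℤ) ^ (desPerm σ + 1)
            else (Polynomial.X : Polynomial ℤ) ^ (desPerm σ + 2)) := by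
      intro i hi
      by_cases h : dsc σ i
      · rw [if_pos ⟨by omega, by simpa using h⟩, if_pos h]
      · rw [if_neg (fun hx => h (by simpa using hx.2)), if_neg h]
    rw [Finset.sum_congr rfl hcong2]
    have e1 : ∑ i ∈ Finset.range m,
        (if dsc σ i
            then (Polynomial.X : Polynomial ℤ) ^ (desPerm σ + 1)
            else (Polynomial.X : Polynomial ℤ) ^ (desPerm σ + 2))
        = (∑ i ∈ Finset.range m, (if dsc σ i then (1:ℕ) else 0))
              • (Polynomial.X : Polynomial ℤ) ^ (desPerm σ + 1)
          + (∑ i ∈ Finset.range m, (if dsc σ i then (0:ℕ) else 1))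
              • (Polynomial.X : Polynomial ℤ) ^ (desPerm σ + 2) := by
      rw [Finset.sum_smul, Finset.sum_smul, ← Finset.sum_add_distrib]
      refine Finset.sum_congr rfl fun i _ => ?_
      by_cases h : dsc σ i <;> simp [h]
    have e2 : (∑ i ∈ Finset.range m, (if dsc σ i then (1:ℕ) else 0)) = desPerm σ :=
      (desPerm_eq σ (by omega)).symm
    have esum : (∑ i ∈ Finset.range m, (if dsc σ i then (1:ℕ) else 0))
        + (∑ i ∈ Finset.range m, (if dsc σ i then (0:ℕ) else 1)) = m := by
      rw [← Finset.sum_add_distrib]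
      have : ∀ i ∈ Finset.range m,
          ((if dsc σ i then (1:ℕ) else 0) + (if dsc σ i then (0:ℕ) else 1)) = 1 := by
        intro i _
        by_cases h : dsc σ i <;> simp [h]
      rw [Finset.sum_congr rfl this, Finset.sum_const, smul_eq_mul, mul_one,
        Finset.card_range]
    obtain ⟨e, he⟩ : ∃ e, m = desPerm σ + e := ⟨m - desPerm σ, by omega⟩
    have e3 : (∑ i ∈ Finset.range m, (if dsc σ i then (0:ℕ) else 1)) = e := by omega
    rw [e1, e2, e3]
    have hn' : ((m:ℤ)+1) - (desPerm σ : ℤ) = ((e+1 : ℕ) : ℤ) := by push_cast; omega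
    rw [show ((m+1 : ℕ):ℤ) = (m:ℤ)+1 by push_cast; ring] at *
    rw [hn', show C (((e+1:ℕ)):ℤ) = ((e+1 : ℕ) : Polynomial ℤ) from Polynomial.C_eq_natCast _,
      show C ((desPerm σ : ℤ)+1) = ((desPerm σ + 1 : ℕ) : Polynomial ℤ) from by
        rw [← Polynomial.C_eq_natCast]; push_cast; ring_nf]
    rw [nsmul_eq_mul, nsmul_eq_mul]
    push_cast
    ring

lemma ins_injective {n : ℕ} :
    Function.Injective (fun p : Fin (n+1) × Equiv.Perm (Fin n) => ins p.1 p.2) := by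
  rintro ⟨j, σ⟩ ⟨j', σ'⟩ h
  simp only at h
  obtain rfl : j = j' :=
    (ins j σ).injective (by rw [ins_apply_self, h, ins_apply_self])
  obtain rfl : σ = σ' := by
    apply Equiv.ext
    intro m
    have h2 : ins j σ (j.succAbove m) = ins j σ' (j.succAbove m) := by rw [h]
    rw [ins_succAbove, ins_succAbove] at h2
    exact Fin.castSucc_injective n h2
  rfl

lemma euler_rec (n : ℕ) :
    eulerianPoly (n+1)
      = X * (1 - X) * derivative (eulerianPoly n)
        + C ((n:ℤ)+1) * X * eulerianPoly n := by
  have hbij : Function.Bijective (fun p : Fin (n+1) × Equiv.Perm (Fin n) => ins p.1 p.2) := by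
    rw [Fintype.bijective_iff_injective_and_card]
    refine ⟨ins_injective, ?_⟩
    simp [Fintype.card_perm, Fintype.card_fin, Nat.factorial_succ]
  have h1 : eulerianPoly (n+1)
      = ∑ p : Fin (n+1) × Equiv.Perm (Fin n), X ^ (desPerm (ins p.1 p.2) + 1) :=
    (Fintype.sum_bijective _ hbij _ _ (fun p => rfl)).symm
  rw [h1, Fintype.sum_prod_type, Finset.sum_comm,
    Finset.sum_congr rfl (fun σ _ => insSum σ)]
  rw [eulerianPoly, derivative_sum, Finset.mul_sum, Finset.mul_sum,
    ← Finset.sum_add_distrib]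
  refine Finset.sum_congr rfl fun σ _ => ?_
  rw [derivative_X_pow]
  have h3 : C ((n:ℤ) - (desPerm σ : ℤ)) = C ((n:ℤ)+1) - C ((desPerm σ : ℤ)+1) := by
    rw [← map_sub]; ring_nf
  rw [show (desPerm σ + 1) - 1 = desPerm σ from rfl, h3,
    show (((desPerm σ + 1 : ℕ)):ℤ) = (desPerm σ : ℤ) + 1 by push_cast; ring]
  ring

lemma Tpoly_zero : Tpoly 0 = 1 := if_pos rfl

lemma Tpoly_rec (n : ℕ) :
    Tpoly (n+1) = X * (1 - X^2) * derivative (Tpoly n)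
      + (X + C (2*(n:ℤ)) * X^2) * Tpoly n := by
  rw [Tpoly_eq_Ppoly, Tpoly_eq_Ppoly, Ppoly_rec]

lemma S_rec (m : ℕ) :
    (∑ k ∈ Finset.range (m+2), C (((m+1).choose k : ℤ)) * Tpoly k * Tpoly (m+1-k))
      = X * (1 - X^2) * derivative
            (∑ k ∈ Finset.range (m+1), C ((m.choose k : ℤ)) * Tpoly k * Tpoly (m-k))
        + (2*X + C (2*(m:ℤ)) * X^2)
            * ∑ k ∈ Finset.range (m+1), C ((m.choose k : ℤ)) * Tpoly k * Tpoly (m-k) := by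
  have key : (∑ k ∈ Finset.range (m+2), C (((m+1).choose k : ℤ)) * Tpoly k * Tpoly (m+1-k))
      = ∑ k ∈ Finset.range (m+1), C ((m.choose k : ℤ)) *
          (Tpoly (k+1) * Tpoly (m-k) + Tpoly k * Tpoly (m+1-k)) := by
    rw [Finset.sum_range_succ'
      (fun k => C (((m+1).choose k : ℤ)) * Tpoly k * Tpoly (m+1-k)) (m+1)]
    simp only [Nat.succ_sub_succ, Nat.choose_zero_right, Nat.cast_one, map_one, one_mul,
      Tpoly_zero, Nat.sub_zero, mul_one]
    have hFsucc : ∀ j ∈ Finset.range (m+1),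
        C (((m+1).choose (j+1) : ℤ)) * Tpoly (j+1) * Tpoly (m-j)
          = C ((m.choose j : ℤ)) * Tpoly (j+1) * Tpoly (m-j)
            + C ((m.choose (j+1) : ℤ)) * Tpoly (j+1) * Tpoly (m-j) := by
      intro j _
      rw [Nat.choose_succ_succ]
      push_cast
      rw [map_add]
      ring
    rw [Finset.sum_congr rfl hFsucc, Finset.sum_add_distrib]
    have hW : (∑ k ∈ Finset.range (m+1), C ((m.choose k : ℤ)) *
          (Tpoly (k+1) * Tpoly (m-k) + Tpoly k * Tpoly (m+1-k)))
        = (∑ j ∈ Finset.range (m+1), C ((m.choose j : ℤ)) * Tpoly (j+1) * Tpoly (m-j))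
          + ∑ k ∈ Finset.range (m+1), C ((m.choose k : ℤ)) * Tpoly k * Tpoly (m+1-k) := by
      rw [← Finset.sum_add_distrib]
      refine Finset.sum_congr rfl fun k _ => ?_
      ring
    rw [hW]
    have hW2 : (∑ k ∈ Finset.range (m+1), C ((m.choose k : ℤ)) * Tpoly k * Tpoly (m+1-k))
        = (∑ j ∈ Finset.range (m+1), C ((m.choose (j+1) : ℤ)) * Tpoly (j+1) * Tpoly (m-j))
          + Tpoly (m+1) := by
      rw [Finset.sum_range_succ'
        (fun k => C ((m.choose k : ℤ)) * Tpoly k * Tpoly (m+1-k)) m]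
      rw [Finset.sum_range_succ
        (fun j => C ((m.choose (j+1) : ℤ)) * Tpoly (j+1) * Tpoly (m-j)) m]
      simp only [Nat.succ_sub_succ, Nat.choose_zero_right, Nat.cast_one, map_one, one_mul,
        Tpoly_zero, Nat.sub_zero, mul_one, Nat.choose_succ_self, Nat.cast_zero, map_zero,
        zero_mul, add_zero]
    rw [hW2]
    ring
  rw [key]
  have hterm : ∀ k ∈ Finset.range (m+1),
      C ((m.choose k : ℤ)) * (Tpoly (k+1) * Tpoly (m-k) + Tpoly k * Tpoly (m+1-k))
        = X * (1 - X^2) * derivative (C ((m.choose k : ℤ)) * Tpoly k * Tpoly (m-k))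
          + (2*X + C (2*(m:ℤ)) * X^2) * (C ((m.choose k : ℤ)) * Tpoly k * Tpoly (m-k)) := by
    intro k hk
    rw [Finset.mem_range] at hk
    have hk' : k ≤ m := by omega
    rw [show m + 1 - k = (m-k)+1 by omega, Tpoly_rec k, Tpoly_rec (m-k)]
    rw [derivative_mul, derivative_mul, derivative_C]
    have hc : C (2*((m-k : ℕ):ℤ)) = C (2*(m:ℤ)) - C (2*(k:ℤ)) := by
      rw [← map_sub]; congr 1; push_cast [Nat.cast_sub hk']; ring
    rw [hc]
    ring
  rw [Finset.sum_congr rfl hterm, Finset.sum_add_distrib, ← Finset.mul_sum,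
    ← Finset.mul_sum, ← derivative_sum]


/-- For n ≥ 1, 2(1+x)^(n-1) A_n(x) = ∑_(k=0)^(n) C(n,k) T_k(x) T_(n-k)(x). -/
theorem stmt10 (n : ℕ) (hn : 1 ≤ n) :
    2 * (1 + Polynomial.X) ^ (n - 1) * eulerianPoly n
      = ∑ k ∈ Finset.range (n + 1),
          Polynomial.C ((n.choose k : ℤ)) * Tpoly k * Tpoly (n - k) := by
  induction n, hn using Nat.le_induction with
  | base =>
    have hE1 : eulerianPoly 1 = X := by
      rw [eulerianPoly, Finset.univ_unique, Finset.sum_singleton]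
      simp [desPerm]
    have hT1 : Tpoly 1 = X := by
      rw [Tpoly, if_neg (by omega)]
      norm_num
      simp [Tc]
    rw [hE1]
    rw [Finset.sum_range_succ, Finset.sum_range_succ, Finset.sum_range_zero]
    norm_num [hT1, Tpoly_zero]
    ring
  | succ n hn ih =>
    rw [show n + 1 - 1 = n from rfl]
    rw [show n + 1 + 1 = (n+1) + 1 from rfl, S_rec n, ← ih]
    obtain ⟨p, rfl⟩ : ∃ p, n = p + 1 := ⟨n - 1, by omega⟩
    rw [show p + 1 - 1 = p from rfl]
    rw [euler_rec (p+1)]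
    rw [derivative_mul, derivative_mul, derivative_pow]
    simp only [derivative_ofNat, zero_mul, add_zero, derivative_add, derivative_one,
      derivative_X, zero_add, mul_one]
    have c1 : C ((((p+1):ℕ):ℤ)+1) = C ((p:ℤ)) + 2 := by
      rw [show ((((p+1):ℕ):ℤ)+1) = (p:ℤ)+2 by push_cast; ring, map_add]
      norm_num
    have c2 : C (2*(((p+1):ℕ):ℤ)) = 2 * C ((p:ℤ)) + 2 := by
      rw [show (2*(((p+1):ℕ):ℤ)) = 2*(p:ℤ)+2 by push_cast; ring, map_add, map_mul]
      norm_num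
    rw [c1, c2]
    cases p with
    | zero =>
      simp only [Nat.cast_zero, map_zero]
      ring
    | succ q =>
      simp only [Nat.add_sub_cancel]
      ring
end
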